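/- Let P be a one-point topological space. The module of singular q-chains of dimension n on P is free of rank 1 over ℤ[q], and the border map ∂ : C_n → C_{n-1} is multiplication by [n+1]_q. Consequently the m-amplitude homology of P in degree n is ℤ[q] when 0 ≤ n = m-1 ≤ N-2 and is 0 otherwise. -/

import Mathlib

open Finset
open scoped NNReal

set_option maxHeartbeats 1000000
set_option synthInstance.maxHeartbeats 400000

noncomputable section


/-- The subring `ℤ[q] ⊆ ℂ`. -/
def Zq (q : ℂ) : Subring ℂ := Subring.closure {q}

/-- `q` as an element of `ℤ[q]`. -/
def qR (q : ℂ) : Zq q := ⟨q, Subring.subset_closure rfl⟩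

/-- The q-integer `[k]_q` as an element of `ℤ[q]`. -/
def qIntR (q : ℂ) (k : ℕ) : Zq q := ∑ i ∈ Finset.range k, qR q ^ i
/-- The standard topological `n`-simplex. -/
def TopSimplex (n : ℕ) : Type := {f : Fin (n + 1) → ℝ≥0 // ∑ i, f i = 1}

instance (n : ℕ) : TopologicalSpace (TopSimplex n) :=
  instTopologicalSpaceSubtype

/-- The affine inclusion `Δ^n → Δ^{n+1}` omitting the `i`-th vertex. -/
def faceIncl {n : ℕ} (i : Fin (n + 2)) : C(TopSimplex n, TopSimplex (n + 1)) where
  toFun f := ⟨fun j => ∑ k ∈ Finset.univ.filter (fun k : Fin (n + 1) => i.succAbove k = j),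
      f.1 k, by
    have := Finset.sum_fiberwise_of_maps_to (g := fun k : Fin (n + 1) => i.succAbove k)
      (fun k (_ : k ∈ Finset.univ) => Finset.mem_univ (i.succAbove k)) f.1
    rw [this]
    exact f.2⟩
  continuous_toFun := by
    apply Continuous.subtype_mk
    exact continuous_pi fun j =>
      continuous_finset_sum _ fun k _ => (continuous_apply k).comp continuous_subtype_val

/-- A singular `n`-simplex in `X`. -/
abbrev SSimplex (n : ℕ) (X : Type) [TopologicalSpace X] := C(TopSimplex n, X)

/-- The `i`-th face of a singular `(n+1)`-simplex. -/
def sFace {X : Type} [TopologicalSpace X] {n : ℕ} (i : Fin (n + 2)) (σ : SSimplex (n + 1) X) :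
    SSimplex n X :=
  σ.comp (faceIncl i)

/-- The total module of singular q-chains over `ℤ[q]`. -/
abbrev QChainsR (q : ℂ) (X : Type) [TopologicalSpace X] : Type :=
  (Σ n : ℕ, SSimplex n X) →₀ Zq q

/-- The q-analog border map `∂ = ∑ᵢ qⁱ ∂ᵢ` on singular q-chains over `ℤ[q]`. -/
def qBorderR (q : ℂ) (X : Type) [TopologicalSpace X] : QChainsR q X →ₗ[Zq q] QChainsR q X :=
  Finsupp.lsum (Zq q) fun s =>
    match s with
    | ⟨0, _⟩ => 0
    | ⟨n + 1, σ⟩ => ∑ i : Fin (n + 2),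
        qR q ^ (i : ℕ) •
          (Finsupp.lsingle (⟨n, sFace i σ⟩ : Σ n : ℕ, SSimplex n X) :
            Zq q →ₗ[Zq q] QChainsR q X)

/-- The submodule of q-chains of degree `n`. -/
def degR (q : ℂ) (X : Type) [TopologicalSpace X] (n : ℕ) : Submodule (Zq q) (QChainsR q X) :=
  Finsupp.supported (Zq q) (Zq q) {s : Σ k : ℕ, SSimplex k X | s.1 = n}


-- basic instances
instance ssimplexUnique (n : ℕ) : Unique (SSimplex n PUnit) where
  default := ⟨fun _ => PUnit.unit, continuous_const⟩
  uniq σ := ContinuousMap.ext fun _ => rfl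

lemma sigma_pt {n : ℕ} (s : Σ k : ℕ, SSimplex k PUnit) (h : s.1 = n) :
    s = ⟨n, default⟩ := by
  rcases s with ⟨k, σ⟩
  dsimp at h
  subst h
  exact congrArg _ (Subsingleton.elim _ _)

-- q-integer algebra
lemma qInt_add (q : ℂ) (a b : ℕ) :
    qIntR q (a + b) = qIntR q a + qR q ^ a * qIntR q b := by
  simp only [qIntR, Finset.sum_range_add, Finset.mul_sum, ← pow_add]

lemma qInt_mul (q : ℂ) (k l : ℕ) :
    qIntR q (k * l) = qIntR q k * ∑ j ∈ Finset.range l, qR q ^ (k * j) := by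
  induction l with
  | zero => simp [qIntR]
  | succ l ih =>
      rw [Nat.mul_succ, qInt_add, ih, Finset.sum_range_succ, mul_add]
      congr 1
      exact mul_comm _ _

lemma qInt_N_eq_zero {N : ℕ} (hN : N.Prime) {q : ℂ} (hq : IsPrimitiveRoot q N) :
    qIntR q N = 0 := by
  apply Subtype.ext
  have : ((qIntR q N : Zq q) : ℂ) = ∑ i ∈ Finset.range N, q ^ i := by
    simp [qIntR, qR]
  rw [this]
  exact hq.geom_sum_eq_zero hN.one_lt

lemma qR_pow_N {N : ℕ} {q : ℂ} (hq : IsPrimitiveRoot q N) : qR q ^ N = 1 := by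
  apply Subtype.ext
  push_cast [qR]
  exact hq.pow_eq_one

lemma qInt_isUnit {N : ℕ} (hN : N.Prime) {q : ℂ} (hq : IsPrimitiveRoot q N)
    {k : ℕ} (hk : ¬ N ∣ k) : IsUnit (qIntR q k) := by
  have hco : Nat.Coprime k N := ((Nat.Prime.coprime_iff_not_dvd hN).mpr hk).symm
  haveI : NeZero N := ⟨hN.pos.ne'⟩
  set u : (ZMod N)ˣ := ZMod.unitOfCoprime k hco with hu
  set l : ℕ := ((u⁻¹ : (ZMod N)ˣ) : ZMod N).val with hl
  have hmod : (k * l : ℕ) ≡ 1 [MOD N] := by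
    have : ((k * l : ℕ) : ZMod N) = ((1 : ℕ) : ZMod N) := by
      push_cast
      rw [hl, ZMod.natCast_val, ZMod.cast_id]
      have : ((k : ZMod N)) = (u : ZMod N) := rfl
      rw [this, ← Units.val_mul, mul_inv_cancel, Units.val_one]
    exact (ZMod.natCast_eq_natCast_iff _ _ _).mp this
  have h1 : k * l % N = 1 := by
    have := hmod
    unfold Nat.ModEq at this
    rwa [Nat.mod_eq_of_lt hN.one_lt] at this
  have hkl : k * l = N * (k * l / N) + 1 := by
    conv_lhs => rw [← Nat.div_add_mod (k * l) N]
    rw [h1]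
  have hone : qIntR q (k * l) = 1 := by
    rw [hkl, qInt_add, qInt_mul, qInt_N_eq_zero hN hq, zero_mul, zero_add,
      pow_mul, qR_pow_N hq, one_pow, one_mul]
    simp [qIntR]
  have := qInt_mul q k l
  rw [hone] at this
  exact IsUnit.of_mul_eq_one _ this.symm

-- border computations
lemma border_single_zero (q : ℂ) (σ : SSimplex 0 PUnit) (a : Zq q) :
    qBorderR q PUnit (Finsupp.single ⟨0, σ⟩ a) = 0 := by
  rw [qBorderR, Finsupp.lsum_single]
  rfl

lemma border_single' (q : ℂ) (n : ℕ) (σ : SSimplex (n+1) PUnit) (a : Zq q) :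
    qBorderR q PUnit (Finsupp.single ⟨n+1, σ⟩ a) =
      qIntR q (n+2) • Finsupp.single (⟨n, default⟩ : Σ k : ℕ, SSimplex k PUnit) a := by
  rw [qBorderR, Finsupp.lsum_single]
  show (∑ i : Fin (n+2), qR q ^ (i:ℕ) •
      (Finsupp.lsingle (⟨n, sFace i σ⟩ : Σ k : ℕ, SSimplex k PUnit) :
        Zq q →ₗ[Zq q] QChainsR q PUnit)) a = _
  rw [LinearMap.sum_apply]
  have h : ∀ i : Fin (n+2), (qR q ^ (i:ℕ) •
      (Finsupp.lsingle (⟨n, sFace i σ⟩ : Σ k : ℕ, SSimplex k PUnit) :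
        Zq q →ₗ[Zq q] QChainsR q PUnit)) a
      = qR q ^ (i:ℕ) • Finsupp.single (⟨n, default⟩ : Σ k : ℕ, SSimplex k PUnit) a := by
    intro i
    rw [LinearMap.smul_apply, Finsupp.lsingle_apply, Subsingleton.elim (sFace i σ) default]
  rw [Finset.sum_congr rfl (fun i _ => h i), ← Finset.sum_smul, qIntR]
  congr 1
  exact Fin.sum_univ_eq_sum_range _ _

/-- product of q-integers [k+2]⋯[k+m+1] -/
def prodQ (q : ℂ) (m k : ℕ) : Zq q := ∏ i ∈ Finset.range m, qIntR q (k + 2 + i)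

lemma border_pow (q : ℂ) (m k : ℕ) (a : Zq q) :
    (qBorderR q PUnit ^ m) (Finsupp.single (⟨k + m, default⟩ : Σ n : ℕ, SSimplex n PUnit) a) =
      Finsupp.single (⟨k, default⟩ : Σ n : ℕ, SSimplex n PUnit) (prodQ q m k * a) := by
  induction m with
  | zero => simp [prodQ]
  | succ m ih =>
      rw [pow_succ, Module.End.mul_apply,
        show (⟨k + (m+1), default⟩ : Σ n : ℕ, SSimplex n PUnit) = ⟨(k+m)+1, default⟩ from rfl,
        border_single' q (k+m) _ a, map_smul, ih, Finsupp.smul_single]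
      congr 1
      rw [prodQ, prodQ, Finset.prod_range_succ, smul_eq_mul, show k+m+2 = k+2+m by ring]
      ring

lemma border_pow_kill (q : ℂ) (n : ℕ) (a : Zq q) :
    (qBorderR q PUnit ^ (n+1))
      (Finsupp.single (⟨n, default⟩ : Σ k : ℕ, SSimplex k PUnit) a) = 0 := by
  induction n generalizing a with
  | zero => rw [pow_one]; exact border_single_zero q _ a
  | succ n ih =>
      rw [pow_succ, Module.End.mul_apply, border_single' q n _ a, map_smul, ih, smul_zero]

lemma border_pow_kill' (q : ℂ) {m n : ℕ} (h : n < m) (a : Zq q) :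
    (qBorderR q PUnit ^ m)
      (Finsupp.single (⟨n, default⟩ : Σ k : ℕ, SSimplex k PUnit) a) = 0 := by
  obtain ⟨d, rfl⟩ : ∃ d, m = d + (n + 1) := ⟨m - (n+1), by omega⟩
  rw [pow_add, Module.End.mul_apply, border_pow_kill, map_zero]

-- degree submodule
lemma mem_deg {q : ℂ} {n : ℕ} {x : QChainsR q PUnit} (hx : x ∈ degR q PUnit n) :
    x = Finsupp.single (⟨n, default⟩ : Σ k : ℕ, SSimplex k PUnit)
      (x ⟨n, default⟩) := by
  rw [degR, Finsupp.mem_supported] at hx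
  refine Finsupp.support_subset_singleton.mp ?_
  intro s hs
  have h2 : s.1 = n := hx (Finset.mem_coe.mpr hs)
  exact Finset.mem_singleton.mpr (sigma_pt s h2)

lemma single_mem_deg (q : ℂ) (n : ℕ) (a : Zq q) :
    Finsupp.single (⟨n, default⟩ : Σ k : ℕ, SSimplex k PUnit) a ∈ degR q PUnit n := by
  rw [degR, Finsupp.mem_supported]
  intro s hs
  have := Finsupp.support_single_subset (Finset.mem_coe.mp hs)
  rw [Finset.mem_singleton] at this
  subst this
  rfl

lemma prodQ_isUnit {N : ℕ} (hN : N.Prime) {q : ℂ} (hq : IsPrimitiveRoot q N) {m k : ℕ}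
    (h : ∀ i, i < m → ¬ N ∣ (k + 2 + i)) : IsUnit (prodQ q m k) := by
  refine Finset.prod_induction _ IsUnit (fun a b => IsUnit.mul) isUnit_one ?_
  intro i hi
  exact qInt_isUnit hN hq (h i (Finset.mem_range.mp hi))

lemma image_full (q : ℂ) {d n : ℕ} (hu : IsUnit (prodQ q d n)) :
    degR q PUnit n ≤ Submodule.map (qBorderR q PUnit ^ d) (degR q PUnit (n + d)) := by
  intro x hx
  obtain ⟨u, hu⟩ := hu
  refine ⟨Finsupp.single (⟨n + d, default⟩ : Σ k : ℕ, SSimplex k PUnit)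
    (((u⁻¹ : (Zq q)ˣ) : Zq q) * x ⟨n, default⟩), single_mem_deg _ _ _, ?_⟩
  rw [border_pow, ← mul_assoc, ← hu, Units.mul_inv, one_mul]
  exact (mem_deg hx).symm

/-- q-homology of a point: the module of `n`-dimensional singular q-chains on a
one-point space is free of rank 1 over `ℤ[q]`, the border map `∂ : C_{n+1} → C_n` is
multiplication by `[n+2]_q`, and the `m`-amplitude homology in degree `n`
(the quotient of `ker ∂^m ∩ C_n` by `∂^{N-m}(C_{n+N-m})`) is `ℤ[q]` when
`0 ≤ n = m - 1 ≤ N - 2` and is `0` otherwise. -/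
theorem point_q_homology (N : ℕ) (hN : N.Prime) (q : ℂ) (hq : IsPrimitiveRoot q N) :
    (∀ n : ℕ, Nonempty ((SSimplex n PUnit →₀ Zq q) ≃ₗ[Zq q] Zq q)) ∧
    (∀ (n : ℕ) (σ : SSimplex (n + 1) PUnit) (a : Zq q),
      qBorderR q PUnit (Finsupp.single ⟨n + 1, σ⟩ a) =
        qIntR q (n + 2) • Finsupp.single (⟨n, sFace 0 σ⟩ : Σ k : ℕ, SSimplex k PUnit) a) ∧
    (∀ m n : ℕ, 1 ≤ m → m ≤ N - 1 →
      ((m = n + 1 ∧ n ≤ N - 2) →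
        ∃ φ : QChainsR q PUnit →ₗ[Zq q] Zq q,
          Submodule.map φ (LinearMap.ker (qBorderR q PUnit ^ m) ⊓ degR q PUnit n) = ⊤ ∧
          ∀ x ∈ LinearMap.ker (qBorderR q PUnit ^ m) ⊓ degR q PUnit n,
            (φ x = 0 ↔ x ∈ Submodule.map (qBorderR q PUnit ^ (N - m))
              (degR q PUnit (n + (N - m))))) ∧
      (¬(m = n + 1 ∧ n ≤ N - 2) →
        LinearMap.ker (qBorderR q PUnit ^ m) ⊓ degR q PUnit n ≤
          Submodule.map (qBorderR q PUnit ^ (N - m)) (degR q PUnit (n + (N - m))))) := by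
  have hN2 : 2 ≤ N := hN.two_le
  refine ⟨fun n => ⟨Finsupp.LinearEquiv.finsuppUnique (Zq q) (Zq q) (SSimplex n PUnit)⟩, ?_, ?_⟩
  · intro n σ a
    rw [border_single' q n σ a, show (sFace 0 σ) = default from Subsingleton.elim _ _]
  intro m n hm1 hmN
  constructor
  · rintro ⟨rfl, hn⟩
    refine ⟨Finsupp.lapply (⟨n, default⟩ : Σ k : ℕ, SSimplex k PUnit), ?_, ?_⟩
    · rw [Submodule.eq_top_iff']
      intro c
      refine ⟨Finsupp.single (⟨n, default⟩ : Σ k : ℕ, SSimplex k PUnit) c,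
        ⟨?_, single_mem_deg _ _ _⟩, ?_⟩
      · exact LinearMap.mem_ker.mpr (border_pow_kill q n c)
      · simp [Finsupp.lapply_apply]
    · intro x hx
      have hxd := mem_deg hx.2
      have himg : ∀ y ∈ degR q PUnit (n + (N - (n+1))),
          (qBorderR q PUnit ^ (N - (n+1))) y = 0 := by
        intro y hy
        rw [mem_deg hy, border_pow]
        rw [Finsupp.single_eq_zero]
        have hz : prodQ q (N - (n+1)) n = 0 := by
          rw [prodQ]
          refine Finset.prod_eq_zero (i := N - n - 2) (Finset.mem_range.mpr (by omega)) ?_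
          rw [show n + 2 + (N - n - 2) = N by omega]
          exact qInt_N_eq_zero hN hq
        rw [hz, zero_mul]
      constructor
      · intro h0
        rw [Finsupp.lapply_apply] at h0
        rw [hxd, h0, Finsupp.single_zero]
        exact Submodule.zero_mem _
      · rintro ⟨y, hy, rfl⟩
        rw [himg y hy, map_zero]
  · intro hnot
    have hmn : m ≠ n + 1 := fun h => hnot ⟨h, by omega⟩
    intro x hx
    obtain ⟨hk, hd⟩ := hx
    rcases lt_or_ge n m with hlt | hge
    · have hu : IsUnit (prodQ q (N - m) n) := by
        refine prodQ_isUnit hN hq fun i hi hdv => ?_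
        have := Nat.le_of_dvd (by omega) hdv
        omega
      exact image_full q hu hd
    · obtain ⟨k, rfl⟩ : ∃ k, n = k + m := ⟨n - m, by omega⟩
      by_cases hdvd : ∃ j, j < m ∧ N ∣ (k + 2 + j)
      · obtain ⟨j0, hj0, hj0d⟩ := hdvd
        have hu : IsUnit (prodQ q (N - m) (k + m)) := by
          refine prodQ_isUnit hN hq fun i hi hdv => ?_
          have h2 : N ∣ (k + m + 2 + i) - (k + 2 + j0) := Nat.dvd_sub hdv hj0d
          have h3 : (k + m + 2 + i) - (k + 2 + j0) = m + i - j0 := by omega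
          have h4 : N ≤ m + i - j0 := Nat.le_of_dvd (by omega) (h3 ▸ h2)
          omega
        exact image_full q hu hd
      · push_neg at hdvd
        have hu : IsUnit (prodQ q m k) := prodQ_isUnit hN hq hdvd
        have h0 : (qBorderR q PUnit ^ m) x = 0 := hk
        rw [mem_deg hd, border_pow] at h0
        have ha : prodQ q m k * x ⟨k + m, default⟩ = 0 := by
          rwa [Finsupp.single_eq_zero] at h0
        obtain ⟨u, hu⟩ := hu
        have hx0 : x ⟨k + m, default⟩ = 0 := by
          have := congrArg (fun z => ((u⁻¹ : (Zq q)ˣ) : Zq q) * z) ha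
          simpa [← hu, ← mul_assoc, Units.inv_mul] using this
        rw [mem_deg hd, hx0, Finsupp.single_zero]
        exact Submodule.zero_mem _
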